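/- Let r ∈ ℕ and let a₁, a₂ be real numbers with 0 < a₂ < a₁. Then the improper integral ∫_0^1 (log u)^r / (a₁ + a₂·u) du converges and equals (−1)^{r+1} · (r!/a₂) · Σ_{n=1}^∞ (−a₂/a₁)^n / n^{r+1}, where log u denotes the real logarithm. -/

import Mathlib

open Real MeasureTheory Set

lemma exp_neg_image : (fun t : ℝ => Real.exp (-t)) '' Set.Ioi 0 = Set.Ioo (0:ℝ) 1 := by
  ext y
  constructor
  · rintro ⟨t, ht, rfl⟩
    exact ⟨exp_pos _, by rwa [exp_lt_one_iff, neg_neg_iff_pos]⟩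
  · rintro ⟨hy0, hy1⟩
    exact ⟨-Real.log y, by simpa using Real.log_neg hy0 hy1, by simp [Real.exp_log hy0]⟩

lemma exp_neg_deriv (t : ℝ) :
    HasDerivWithinAt (fun t : ℝ => Real.exp (-t)) (-Real.exp (-t)) (Set.Ioi 0) t := by
  have := (Real.hasDerivAt_exp (-t)).comp t (hasDerivAt_neg t)
  simpa [Function.comp_def] using this.hasDerivWithinAt

lemma exp_neg_injOn : Set.InjOn (fun t : ℝ => Real.exp (-t)) (Set.Ioi 0) :=
  (Real.exp_injective.comp neg_injective).injOn

lemma integrand_eq (r n : ℕ) (t : ℝ) (_ht : t ∈ Set.Ioi (0:ℝ)) :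
    |(-Real.exp (-t))| • ((Real.exp (-t)) ^ n * (-Real.log (Real.exp (-t))) ^ r)
      = t ^ ((r:ℝ) + 1 - 1) * Real.exp (-(((n:ℝ)+1) * t)) := by
  rw [smul_eq_mul, abs_neg, abs_of_pos (exp_pos _), Real.log_exp, neg_neg,
    show ((r:ℝ) + 1 - 1) = (r:ℝ) by ring, Real.rpow_natCast]
  rw [← Real.exp_nat_mul, show (-(((n:ℝ)+1)*t)) = -t + (n:ℝ)*(-t) by ring, Real.exp_add]
  ring

lemma aux_int (r n : ℕ) :
    IntegrableOn (fun u : ℝ => u ^ n * (-Real.log u) ^ r) (Set.Ioc (0:ℝ) 1) := by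
  rw [integrableOn_Ioc_iff_integrableOn_Ioo, ← exp_neg_image,
    MeasureTheory.integrableOn_image_iff_integrableOn_abs_deriv_smul measurableSet_Ioi
      (fun t _ => exp_neg_deriv t) exp_neg_injOn]
  have h := integrableOn_rpow_mul_exp_neg_mul_rpow (p := 1) (s := (r:ℝ)) (b := (n:ℝ)+1)
    (neg_one_lt_zero.trans_le (Nat.cast_nonneg r)) zero_lt_one (by positivity)
  refine ((h.congr_fun (fun t ht => by rw [Real.rpow_one]) measurableSet_Ioi).congr_fun
    (fun t ht => ?_) measurableSet_Ioi)
  rw [integrand_eq r n t ht, show ((r:ℝ) + 1 - 1) = (r:ℝ) by ring, Real.rpow_natCast]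
  ring_nf

lemma aux_val (r n : ℕ) :
    ∫ u in Set.Ioc (0:ℝ) 1, u ^ n * (-Real.log u) ^ r
      = (r.factorial : ℝ) / ((n:ℝ) + 1) ^ (r + 1) := by
  rw [MeasureTheory.integral_Ioc_eq_integral_Ioo, ← exp_neg_image,
    MeasureTheory.integral_image_eq_integral_abs_deriv_smul measurableSet_Ioi
      (fun t _ => exp_neg_deriv t) exp_neg_injOn]
  rw [MeasureTheory.setIntegral_congr_fun measurableSet_Ioi (integrand_eq r n)]
  rw [integral_rpow_mul_exp_neg_mul_Ioi (by positivity) (by positivity)]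
  rw [Real.Gamma_nat_eq_factorial, show ((r:ℝ)+1) = ((r+1:ℕ):ℝ) by push_cast; ring,
    Real.rpow_natCast, one_div, inv_pow, inv_mul_eq_div]

/-- Appendix Lemma 8.4: `∫_0^1 (log u)^r/(a₁+a₂u) du` converges and equals
`(-1)^{r+1} (r!/a₂) Li_{r+1}(-a₂/a₁)`, the polylogarithm written as the
absolutely convergent series `Σ_{n≥1} (-a₂/a₁)^n/n^{r+1}`. -/
theorem integral_log_pow_div_linear (r : ℕ) (a₁ a₂ : ℝ)
    (ha₂ : 0 < a₂) (ha : a₂ < a₁) :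
    IntegrableOn (fun u : ℝ => (Real.log u) ^ r / (a₁ + a₂ * u)) (Set.Ioc (0:ℝ) 1) ∧
      ∫ u in Set.Ioc (0:ℝ) 1, (Real.log u) ^ r / (a₁ + a₂ * u) =
        (-1) ^ (r + 1) * ((r.factorial : ℝ) / a₂) *
          ∑' n : ℕ, (-a₂ / a₁) ^ (n + 1) / ((n : ℝ) + 1) ^ (r + 1) := by
  have ha₁ : 0 < a₁ := ha₂.trans ha
  have hq0 : 0 < a₂ / a₁ := div_pos ha₂ ha₁
  have hq1 : a₂ / a₁ < 1 := (div_lt_one ha₁).mpr ha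
  set F : ℕ → ℝ → ℝ := fun n u => ((-(a₂/a₁))^n / a₁) * (u^n * (Real.log u)^r) with hF
  have hlogpow : ∀ u : ℝ, (Real.log u)^r = (-1:ℝ)^r * (-Real.log u)^r := fun u => by
    rw [← mul_pow, neg_one_mul, neg_neg]
  -- integrability of each term
  have hFint : ∀ n, Integrable (F n) (volume.restrict (Set.Ioc (0:ℝ) 1)) := by
    intro n
    have h := (aux_int r n).const_mul (((-(a₂/a₁))^n / a₁) * (-1:ℝ)^r)
    refine h.congr (Filter.Eventually.of_forall fun u => ?_)
    simp only [hF]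
    rw [hlogpow u]; ring
  -- value of the norm integrals
  have hFnorm : ∀ n, ∫ u in Set.Ioc (0:ℝ) 1, ‖F n u‖
      = (a₂/a₁)^n / a₁ * ((r.factorial : ℝ) / ((n:ℝ)+1)^(r+1)) := by
    intro n
    have heq : ∀ u ∈ Set.Ioc (0:ℝ) 1,
        ‖F n u‖ = ((a₂/a₁)^n / a₁) * (u^n * (-Real.log u)^r) := by
      intro u hu
      have hlog : Real.log u ≤ 0 := Real.log_nonpos hu.1.le hu.2
      simp only [hF, Real.norm_eq_abs, abs_mul, abs_div, abs_pow, abs_neg,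
        abs_of_pos ha₁, abs_of_pos hq0, abs_of_pos hu.1, abs_of_nonpos hlog]
    rw [MeasureTheory.setIntegral_congr_fun measurableSet_Ioc heq,
      integral_const_mul, aux_val]
  -- summability of norm integrals
  have hsum : Summable (fun n => ∫ u in Set.Ioc (0:ℝ) 1, ‖F n u‖) := by
    refine Summable.of_nonneg_of_le
      (fun n => integral_nonneg fun u => norm_nonneg _)
      (fun n => ?_) ((summable_geometric_of_lt_one hq0.le hq1).mul_left
        ((r.factorial : ℝ) / a₁))
    rw [hFnorm n]
    have h1 : (1:ℝ) ≤ ((n:ℝ)+1)^(r+1) := one_le_pow₀ (by linarith [(Nat.cast_nonneg n : (0:ℝ) ≤ n)])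
    calc (a₂/a₁)^n / a₁ * ((r.factorial : ℝ) / ((n:ℝ)+1)^(r+1))
        ≤ (a₂/a₁)^n / a₁ * (r.factorial : ℝ) := by
          gcongr
          exact div_le_self (Nat.cast_nonneg _) h1
      _ = (r.factorial : ℝ) / a₁ * (a₂/a₁)^n := by ring
  -- swap sum and integral
  have hswap := MeasureTheory.integral_tsum_of_summable_integral_norm
    (μ := volume.restrict (Set.Ioc (0:ℝ) 1)) hFint hsum
  -- pointwise sum of the series
  have hpt : ∀ u ∈ Set.Ioc (0:ℝ) 1,
      ∑' n, F n u = (Real.log u)^r / (a₁ + a₂ * u) := by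
    intro u hu
    have hnorm : ‖(-(a₂/a₁)) * u‖ < 1 := by
      rw [Real.norm_eq_abs, abs_mul, abs_neg, abs_of_pos hq0, abs_of_pos hu.1]
      calc a₂/a₁ * u ≤ a₂/a₁ * 1 := by gcongr; exact hu.2
        _ < 1 := by rwa [mul_one]
    have hg := tsum_geometric_of_norm_lt_one hnorm
    have heq : (fun n => F n u)
        = fun n => ((Real.log u)^r / a₁) * ((-(a₂/a₁)) * u)^n := by
      funext n
      simp only [hF]
      rw [mul_pow]; ring
    rw [heq, tsum_mul_left, hg]
    have hden : (0:ℝ) < a₁ + a₂ * u := by nlinarith [hu.1]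
    have hden2 : (0:ℝ) < 1 - -(a₂/a₁) * u := by nlinarith [hu.1, hu.2]
    field_simp
    rw [sub_neg_eq_add, mul_div_assoc, div_self hden.ne', mul_one]
  -- integrability of the full integrand
  have hfm : AEStronglyMeasurable (fun u : ℝ => (Real.log u) ^ r / (a₁ + a₂ * u))
      (volume.restrict (Set.Ioc (0:ℝ) 1)) :=
    ((Real.measurable_log.pow_const r).div
      (measurable_const.add (measurable_const.mul measurable_id))).aestronglyMeasurable
  have hfint : IntegrableOn (fun u : ℝ => (Real.log u) ^ r / (a₁ + a₂ * u))
      (Set.Ioc (0:ℝ) 1) := by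
    have hbound := (aux_int r 0).const_mul (1/a₁)
    refine Integrable.mono' hbound hfm ?_
    filter_upwards [ae_restrict_mem measurableSet_Ioc] with u hu
    have hlog : Real.log u ≤ 0 := Real.log_nonpos hu.1.le hu.2
    have hden : (0:ℝ) < a₁ + a₂ * u := by nlinarith [hu.1]
    rw [Real.norm_eq_abs, abs_div, abs_pow, abs_of_nonpos hlog, abs_of_pos hden,
      pow_zero, one_mul, div_mul_eq_mul_div, one_mul]
    exact div_le_div_of_nonneg_left (pow_nonneg (neg_nonneg.2 hlog) r) ha₁
      (by nlinarith [hu.1])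
  refine ⟨hfint, ?_⟩
  -- term integrals
  have hInt : ∀ n, ∫ u in Set.Ioc (0:ℝ) 1, F n u
      = ((-(a₂/a₁))^n / a₁) * ((-1:ℝ)^r * ((r.factorial : ℝ) / ((n:ℝ)+1)^(r+1))) := by
    intro n
    have h2 : ∫ u in Set.Ioc (0:ℝ) 1, u^n * (Real.log u)^r
        = (-1:ℝ)^r * ((r.factorial : ℝ) / ((n:ℝ)+1)^(r+1)) := by
      rw [← aux_val r n, ← integral_const_mul]
      refine MeasureTheory.setIntegral_congr_fun measurableSet_Ioc fun u hu => ?_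
      rw [hlogpow u]; ring
    calc ∫ u in Set.Ioc (0:ℝ) 1, F n u
        = ((-(a₂/a₁))^n / a₁) * ∫ u in Set.Ioc (0:ℝ) 1, u^n * (Real.log u)^r := by
          simp only [hF]; rw [integral_const_mul]
      _ = _ := by rw [h2]
  calc ∫ u in Set.Ioc (0:ℝ) 1, (Real.log u) ^ r / (a₁ + a₂ * u)
      = ∫ u in Set.Ioc (0:ℝ) 1, ∑' n, F n u :=
        (MeasureTheory.setIntegral_congr_fun measurableSet_Ioc
          (fun u hu => (hpt u hu).symm))
    _ = ∑' n, ∫ u in Set.Ioc (0:ℝ) 1, F n u := hswap.symm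
    _ = (-1) ^ (r + 1) * ((r.factorial : ℝ) / a₂) *
          ∑' n : ℕ, (-a₂ / a₁) ^ (n + 1) / ((n : ℝ) + 1) ^ (r + 1) := by
        rw [← tsum_mul_left]
        refine tsum_congr fun n => ?_
        rw [hInt n, neg_div a₁ a₂, pow_succ]
        have hpow : ((n:ℝ)+1)^(r+1) ≠ 0 := by positivity
        field_simp [ha₁.ne']
        ring_nf
        rw [mul_inv_cancel_right₀ ha₁.ne']
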